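/- arXiv:2203.00606 — 2 statements merged into one kernel-verified Lean document; each statement's English description precedes it below -/
import Mathlib

section
/- Translation covariance: for y ∈ ℝ^N, (W_ψ^{α,λ}(τ_y f))(a,b) = e_{α,-λ²}(b) e_{α,λ²}(b-y) e_{α,λ²}(y) (W_ψ^{α,λ} \check{f})(a, b-y), where (τ_y f)(x) = f(x-y) and \check{f}(t) = f(t) exp(iλ² Σ_{k=1}^N 2 (cot α_k/2) t_k y_k). -/
open MeasureTheory Real Complex Finset

noncomputable section

/-- Points of `ℝ^N` with all coordinates nonzero (`ℝ₀^N`). -/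
def Omega (N : ℕ) : Set (Fin N → ℝ) := {a | ∀ k, a k ≠ 0}

/-- `|a|_m = |a₁ a₂ ⋯ a_N|`. -/
def modAbs {N : ℕ} (a : Fin N → ℝ) : ℝ := |∏ k, a k|

/-- The chirp `e_{α,μ}(t) = exp(i μ Σ_k (cot α_k / 2) t_k²)`. -/
def chirp {N : ℕ} (α : Fin N → ℝ) (μ : ℝ) (t : Fin N → ℝ) : ℂ :=
  Complex.exp (Complex.I *
    ((μ * ∑ k, ((Real.cos (α k) / Real.sin (α k)) / 2) * (t k) ^ 2 : ℝ) : ℂ))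

/-- The window function `Ψ_{α,λ,a,b}`. -/
def window {N : ℕ} (c : ℂ) (α : Fin N → ℝ) (l : ℝ) (ψ : (Fin N → ℝ) → ℂ)
    (a b t : Fin N → ℝ) : ℂ :=
  (starRingEnd ℂ) c * chirp α (l ^ 2) b * chirp α (-(l ^ 2)) t *
    ((((modAbs a) ^ (-(1 / 2 : ℝ)) : ℝ)) : ℂ) *
    (ψ (fun k => (t k - b k) / a k) * chirp α (l ^ 2) (fun k => (t k - b k) / a k))

/-- The multidimensional fractional wavelet transform `(W_ψ^{α,λ} f)(a,b) = ⟨f, Ψ_{α,λ,a,b}⟩`. -/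
def MFrWT {N : ℕ} (c : ℂ) (α : Fin N → ℝ) (l : ℝ) (ψ f : (Fin N → ℝ) → ℂ)
    (a b : Fin N → ℝ) : ℂ :=
  ∫ t : Fin N → ℝ, f t * (starRingEnd ℂ) (window c α l ψ a b t)

/-- The multidimensional fractional Fourier kernel. -/
def frKernel {N : ℕ} (c : ℂ) (α : Fin N → ℝ) (l : ℝ) (t ξ : Fin N → ℝ) : ℂ :=
  c / ((Real.sqrt (2 * Real.pi) : ℝ) : ℂ) ^ (N : ℕ) * chirp α (l ^ 2) t * chirp α (l ^ 2) ξ *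
    Complex.exp (-(Complex.I) * ((l ^ 2 * ∑ k, t k * ξ k / Real.sin (α k) : ℝ) : ℂ))

/-- The multidimensional fractional Fourier transform. -/
def MFrFT {N : ℕ} (c : ℂ) (α : Fin N → ℝ) (l : ℝ) (f : (Fin N → ℝ) → ℂ)
    (ξ : Fin N → ℝ) : ℂ :=
  ∫ t : Fin N → ℝ, f t * frKernel c α l t ξ

/-- The admissibility constant `C_{α,λ}`. -/
def Cconst {N : ℕ} (c : ℂ) (α : Fin N → ℝ) (l : ℝ) (ψ : (Fin N → ℝ) → ℂ) : ℝ :=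
  (2 * Real.pi) ^ (N : ℕ) * ∫ u in Omega N, ‖MFrFT c α l ψ u‖ ^ 2 / modAbs u

/-- An admissible wavelet. -/
def Admissible {N : ℕ} (c : ℂ) (α : Fin N → ℝ) (l : ℝ) (ψ : (Fin N → ℝ) → ℂ) : Prop :=
  MemLp ψ 2 (volume : Measure (Fin N → ℝ)) ∧ ψ ≠ 0 ∧
    IntegrableOn (fun u => ‖MFrFT c α l ψ u‖ ^ 2 / modAbs u) (Omega N)

/-- `α_k ∈ (-π, π) \ {0}` for every `k`. -/
def goodAngles (N : ℕ) (α : Fin N → ℝ) : Prop :=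
  ∀ k, α k ∈ Set.Ioo (-Real.pi) Real.pi ∧ α k ≠ 0

lemma conj_chirp {N : ℕ} (α : Fin N → ℝ) (μ : ℝ) (x : Fin N → ℝ) :
    (starRingEnd ℂ) (chirp α μ x) = chirp α (-μ) x := by
  unfold chirp
  rw [← Complex.exp_conj]
  congr 1
  simp only [map_mul, Complex.conj_I, Complex.conj_ofReal]
  push_cast
  ring

lemma chirp_mul_neg {N : ℕ} (α : Fin N → ℝ) (μ : ℝ) (x : Fin N → ℝ) :
    chirp α μ x * chirp α (-μ) x = 1 := by
  unfold chirp
  rw [← Complex.exp_add, ← Complex.exp_zero]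
  congr 1
  push_cast
  ring

lemma chirp_add {N : ℕ} (α : Fin N → ℝ) (μ : ℝ) (t y : Fin N → ℝ) :
    chirp α μ (t + y) = chirp α μ t * chirp α μ y *
      Complex.exp (Complex.I *
        ((μ * ∑ k, 2 * ((Real.cos (α k) / Real.sin (α k)) / 2) * t k * y k : ℝ) : ℂ)) := by
  unfold chirp
  rw [← Complex.exp_add, ← Complex.exp_add]
  congr 1
  have h : (μ * ∑ k, ((Real.cos (α k) / Real.sin (α k)) / 2) * ((t + y) k) ^ 2)
      = μ * ∑ k, ((Real.cos (α k) / Real.sin (α k)) / 2) * (t k) ^ 2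
      + (μ * ∑ k, ((Real.cos (α k) / Real.sin (α k)) / 2) * (y k) ^ 2
      + μ * ∑ k, 2 * ((Real.cos (α k) / Real.sin (α k)) / 2) * t k * y k) := by
    simp only [Pi.add_apply]
    rw [← mul_add, ← mul_add, ← Finset.sum_add_distrib, ← Finset.sum_add_distrib]
    congr 1
    apply Finset.sum_congr rfl
    intro k _
    ring
  rw [h]
  push_cast
  ring

/-- translation covariance of the MFrWT. -/
theorem mfrwt_translation (N : ℕ) (α : Fin N → ℝ) (l : ℝ) (hl : l ≠ 0) (c : ℂ) (hc : c ≠ 0)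
    (hα : goodAngles N α) (ψ f : (Fin N → ℝ) → ℂ)
    (hψ : Admissible c α l ψ)
    (hf : MemLp f 2 (volume : Measure (Fin N → ℝ)))
    (y : Fin N → ℝ) (a b : Fin N → ℝ) (ha : ∀ k, a k ≠ 0) :
    MFrWT c α l ψ (fun x => f (x - y)) a b =
      chirp α (-(l ^ 2)) b * chirp α (l ^ 2) (b - y) * chirp α (l ^ 2) y *
        MFrWT c α l ψ
          (fun t => f t * Complex.exp (Complex.I *
            ((l ^ 2 * ∑ k, 2 * ((Real.cos (α k) / Real.sin (α k)) / 2) * t k * y k : ℝ) : ℂ)))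
          a (b - y) := by
  unfold MFrWT
  have hsub : (∫ t : Fin N → ℝ, f (t - y) * (starRingEnd ℂ) (window c α l ψ a b t))
      = ∫ t : Fin N → ℝ, f t * (starRingEnd ℂ) (window c α l ψ a b (t + y)) := by
    rw [← MeasureTheory.integral_sub_right_eq_self
      (fun t => f t * (starRingEnd ℂ) (window c α l ψ a b (t + y))) y]
    simp
  rw [hsub]
  have key : ∀ t : Fin N → ℝ, f t * (starRingEnd ℂ) (window c α l ψ a b (t + y)) =
      chirp α (-(l ^ 2)) b * chirp α (l ^ 2) (b - y) * chirp α (l ^ 2) y *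
        ((f t * Complex.exp (Complex.I *
            ((l ^ 2 * ∑ k, 2 * ((Real.cos (α k) / Real.sin (α k)) / 2) * t k * y k : ℝ) : ℂ))) *
          (starRingEnd ℂ) (window c α l ψ a (b - y) t)) := by
    intro t
    have harg : (fun k => ((t + y) k - b k) / a k) = (fun k => (t k - (b - y) k) / a k) := by
      funext k
      simp only [Pi.add_apply, Pi.sub_apply]
      ring
    rw [← mul_one (f t * (starRingEnd ℂ) (window c α l ψ a b (t + y))),
      ← chirp_mul_neg α (l ^ 2) (b - y)]
    unfold window
    rw [harg]
    simp only [map_mul, conj_chirp, neg_neg, Complex.conj_ofReal]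
    rw [chirp_add α (l ^ 2) t y]
    ring
  simp_rw [key]
  rw [MeasureTheory.integral_const_mul]
end
end

section
/- MFrFT of the wavelet window: for ψ ∈ L²(ℝ^N), a ∈ ℝ_0^N, b ∈ ℝ^N, (F_{α,λ} Ψ_{α,λ,a,b})(ξ) = conj(c(α_λ)) √(|a|_m) e_{α,λ²}(b) e_{α,λ²}(ξ) e_{α,-λ²}(aξ) exp(-iλ² Σ_{k=1}^N b_k ξ_k csc α_k) (F_{α,λ} ψ)(aξ), where aξ is componentwise product. -/
open MeasureTheory Real Complex Finset

noncomputable section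

lemma cov_aux {N : ℕ} (a b : Fin N → ℝ) (ha : ∀ k, a k ≠ 0) (G : (Fin N → ℝ) → ℂ)
    (hG : AEStronglyMeasurable G (volume : Measure (Fin N → ℝ))) :
    ∫ t : Fin N → ℝ, G (fun k => (t k - b k) / a k) = modAbs a * ∫ u : Fin N → ℝ, G u := by
  classical
  set L : ((Fin N) → ℝ) →ₗ[ℝ] (Fin N) → ℝ := Matrix.toLin' (Matrix.diagonal fun k => (a k)⁻¹)
  have hLapp : ∀ t : Fin N → ℝ, L t = fun k => t k / a k := by
    intro t
    funext k
    simp [L, Matrix.toLin'_apply, Matrix.mulVec_diagonal, div_eq_inv_mul]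
  have hdet : LinearMap.det L = ∏ k, (a k)⁻¹ := by
    simp [L, LinearMap.det_toLin', Matrix.det_diagonal]
  have hdet0 : LinearMap.det L ≠ 0 := by
    rw [hdet]
    exact Finset.prod_ne_zero_iff.2 fun k _ => inv_ne_zero (ha k)
  have hmap : Measure.map L (volume : Measure (Fin N → ℝ)) =
      ENNReal.ofReal (modAbs a) • volume := by
    rw [Real.map_linearMap_volume_pi_eq_smul_volume_pi hdet0]
    congr 1
    rw [hdet]
    rw [← Finset.prod_inv_distrib]
    simp [modAbs, abs_prod]
  have h1 : ∀ t : Fin N → ℝ, (fun k => (t k - b k) / a k) = L (t - b) := by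
    intro t; rw [hLapp]; funext k; simp
  calc ∫ t : Fin N → ℝ, G (fun k => (t k - b k) / a k)
      = ∫ t : Fin N → ℝ, G (L (t - b)) := by simp_rw [h1]
    _ = ∫ t : Fin N → ℝ, G (L t) := integral_sub_right_eq_self (fun s => G (L s)) b
    _ = ∫ u, G u ∂(Measure.map L volume) := by
        rw [integral_map]
        · exact L.continuous_of_finiteDimensional.measurable.aemeasurable
        · rw [hmap]
          exact hG.mono_ac (Measure.absolutelyContinuous_of_le_smul le_rfl)
    _ = modAbs a * ∫ u : Fin N → ℝ, G u := by
        rw [hmap, integral_smul_measure,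
          ENNReal.toReal_ofReal (show (0:ℝ) ≤ modAbs a from abs_nonneg _), Complex.real_smul]

lemma pointwise_aux {N : ℕ} (c : ℂ) (α : Fin N → ℝ) (l : ℝ) (ψ : (Fin N → ℝ) → ℂ)
    (a b ξ t : Fin N → ℝ) (ha : ∀ k, a k ≠ 0) :
    window c α l ψ a b t * frKernel c α l t ξ =
      ((starRingEnd ℂ) c * ((((modAbs a) ^ (-(1 / 2 : ℝ)) : ℝ)) : ℂ) *
        chirp α (l ^ 2) b * chirp α (l ^ 2) ξ * chirp α (-(l ^ 2)) (a * ξ) *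
        Complex.exp (-(Complex.I) * ((l ^ 2 * ∑ k, b k * ξ k / Real.sin (α k) : ℝ) : ℂ))) *
      (ψ (fun k => (t k - b k) / a k) *
        frKernel c α l (fun k => (t k - b k) / a k) (a * ξ)) := by
  have hsum : (∑ k, ((t k - b k) / a k) * ((a * ξ) k) / Real.sin (α k))
      = (∑ k, t k * ξ k / Real.sin (α k)) - ∑ k, b k * ξ k / Real.sin (α k) := by
    rw [← Finset.sum_sub_distrib]
    refine Finset.sum_congr rfl fun k _ => ?_
    have h : ((t k - b k) / a k) * ((a * ξ) k) = t k * ξ k - b k * ξ k := by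
      have := ha k
      field_simp
      simp only [Pi.mul_apply]
      ring
    rw [h, sub_div]
  simp only [window, frKernel, chirp]
  rw [hsum]
  push_cast
  set CB : ℂ := ∑ x : Fin N, Complex.cos (α x) / Complex.sin (α x) / 2 * (b x : ℂ) ^ 2 with hCB
  set CT : ℂ := ∑ x : Fin N, Complex.cos (α x) / Complex.sin (α x) / 2 * (t x : ℂ) ^ 2 with hCT
  set CU : ℂ := ∑ x : Fin N,
    Complex.cos (α x) / Complex.sin (α x) / 2 * (((t x : ℂ) - (b x : ℂ)) / (a x : ℂ)) ^ 2 with hCU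
  set CX : ℂ := ∑ x : Fin N, Complex.cos (α x) / Complex.sin (α x) / 2 * (ξ x : ℂ) ^ 2 with hCX
  set CA : ℂ := ∑ x : Fin N, Complex.cos (α x) / Complex.sin (α x) / 2 * ((a * ξ) x : ℂ) ^ 2 with hCA
  set ST : ℂ := ∑ x : Fin N, (t x : ℂ) * (ξ x : ℂ) / Complex.sin (α x) with hST
  set SB : ℂ := ∑ x : Fin N, (b x : ℂ) * (ξ x : ℂ) / Complex.sin (α x) with hSB
  set P : ℂ := ψ (fun k => (t k - b k) / a k) with hP
  set M : ℂ := ((((modAbs a) ^ (-(1 / 2 : ℝ)) : ℝ)) : ℂ) with hM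
  set K : ℂ := c / ((Real.sqrt (2 * Real.pi) : ℝ) : ℂ) ^ (N : ℕ) with hK
  set C : ℂ := (starRingEnd ℂ) c with hC
  trans (C * M * P * K) * Complex.exp
    (Complex.I * ((l:ℂ) ^ 2 * CB) + Complex.I * (-(l:ℂ) ^ 2 * CT) + Complex.I * ((l:ℂ) ^ 2 * CU)
      + Complex.I * ((l:ℂ) ^ 2 * CT) + Complex.I * ((l:ℂ) ^ 2 * CX)
      + -Complex.I * ((l:ℂ) ^ 2 * ST))
  · simp only [Complex.exp_add]
    ring
  trans (C * M * P * K) * Complex.exp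
    (Complex.I * ((l:ℂ) ^ 2 * CB) + Complex.I * ((l:ℂ) ^ 2 * CX) + Complex.I * (-(l:ℂ) ^ 2 * CA)
      + -Complex.I * ((l:ℂ) ^ 2 * SB) + Complex.I * ((l:ℂ) ^ 2 * CU)
      + Complex.I * ((l:ℂ) ^ 2 * CA) + -Complex.I * ((l:ℂ) ^ 2 * (ST - SB)))
  · congr 1
    ring_nf
  · simp only [Complex.exp_add]
    ring

/-- MFrFT of the wavelet window `Ψ_{α,λ,a,b}`. -/
theorem mfrft_window (N : ℕ) (α : Fin N → ℝ) (l : ℝ) (hl : l ≠ 0) (c : ℂ) (hc : c ≠ 0)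
    (hα : goodAngles N α) (ψ : (Fin N → ℝ) → ℂ)
    (hψ : MemLp ψ 2 (volume : Measure (Fin N → ℝ)))
    (a b ξ : Fin N → ℝ) (ha : ∀ k, a k ≠ 0) :
    MFrFT c α l (window c α l ψ a b) ξ =
      (starRingEnd ℂ) c * ((Real.sqrt (modAbs a) : ℝ) : ℂ) *
        chirp α (l ^ 2) b * chirp α (l ^ 2) ξ * chirp α (-(l ^ 2)) (a * ξ) *
        Complex.exp (-(Complex.I) * ((l ^ 2 * ∑ k, b k * ξ k / Real.sin (α k) : ℝ) : ℂ)) *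
        MFrFT c α l ψ (a * ξ) := by
  classical
  have hcont : Continuous (fun u : Fin N → ℝ => frKernel c α l u (a * ξ)) := by
    simp only [frKernel, chirp]
    fun_prop
  have hG : AEStronglyMeasurable (fun u : Fin N → ℝ => ψ u * frKernel c α l u (a * ξ))
      (volume : Measure (Fin N → ℝ)) :=
    hψ.aestronglyMeasurable.mul hcont.aestronglyMeasurable
  have h0 : (0:ℝ) < modAbs a :=
    abs_pos.2 (Finset.prod_ne_zero_iff.2 fun k _ => ha k)
  have hsqrt : ((((modAbs a) ^ (-(1 / 2 : ℝ)) : ℝ)) : ℂ) * ((modAbs a : ℝ) : ℂ)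
      = ((Real.sqrt (modAbs a) : ℝ) : ℂ) := by
    rw [← Complex.ofReal_mul]
    congr 1
    calc modAbs a ^ (-(1/2:ℝ)) * modAbs a
        = modAbs a ^ (-(1/2:ℝ)) * modAbs a ^ (1:ℝ) := by rw [Real.rpow_one]
      _ = modAbs a ^ ((-(1/2:ℝ)) + 1) := (Real.rpow_add h0 _ _).symm
      _ = modAbs a ^ ((1:ℝ)/2) := by norm_num
      _ = Real.sqrt (modAbs a) := (Real.sqrt_eq_rpow _).symm
  calc MFrFT c α l (window c α l ψ a b) ξ
      = ∫ t : Fin N → ℝ,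
          ((starRingEnd ℂ) c * ((((modAbs a) ^ (-(1 / 2 : ℝ)) : ℝ)) : ℂ) *
            chirp α (l ^ 2) b * chirp α (l ^ 2) ξ * chirp α (-(l ^ 2)) (a * ξ) *
            Complex.exp (-(Complex.I) * ((l ^ 2 * ∑ k, b k * ξ k / Real.sin (α k) : ℝ) : ℂ))) *
          (ψ (fun k => (t k - b k) / a k) *
            frKernel c α l (fun k => (t k - b k) / a k) (a * ξ)) := by
        simp only [MFrFT]
        congr 1
        funext t
        exact pointwise_aux c α l ψ a b ξ t ha
    _ = ((starRingEnd ℂ) c * ((((modAbs a) ^ (-(1 / 2 : ℝ)) : ℝ)) : ℂ) *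
            chirp α (l ^ 2) b * chirp α (l ^ 2) ξ * chirp α (-(l ^ 2)) (a * ξ) *
            Complex.exp (-(Complex.I) * ((l ^ 2 * ∑ k, b k * ξ k / Real.sin (α k) : ℝ) : ℂ))) *
          ∫ t : Fin N → ℝ, (fun u : Fin N → ℝ => ψ u * frKernel c α l u (a * ξ))
            (fun k => (t k - b k) / a k) := by
        rw [integral_const_mul]
    _ = ((starRingEnd ℂ) c * ((((modAbs a) ^ (-(1 / 2 : ℝ)) : ℝ)) : ℂ) *
            chirp α (l ^ 2) b * chirp α (l ^ 2) ξ * chirp α (-(l ^ 2)) (a * ξ) *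
            Complex.exp (-(Complex.I) * ((l ^ 2 * ∑ k, b k * ξ k / Real.sin (α k) : ℝ) : ℂ))) *
          (((modAbs a : ℝ) : ℂ) * MFrFT c α l ψ (a * ξ)) := by
        rw [cov_aux a b ha _ hG]
        rfl
    _ = _ := by
        rw [show ((starRingEnd ℂ) c * ((((modAbs a) ^ (-(1 / 2 : ℝ)) : ℝ)) : ℂ) *
            chirp α (l ^ 2) b * chirp α (l ^ 2) ξ * chirp α (-(l ^ 2)) (a * ξ) *
            Complex.exp (-(Complex.I) * ((l ^ 2 * ∑ k, b k * ξ k / Real.sin (α k) : ℝ) : ℂ))) *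
            (((modAbs a : ℝ) : ℂ) * MFrFT c α l ψ (a * ξ)) =
            ((((modAbs a) ^ (-(1 / 2 : ℝ)) : ℝ) : ℂ) * ((modAbs a : ℝ) : ℂ)) *
            ((starRingEnd ℂ) c * chirp α (l ^ 2) b * chirp α (l ^ 2) ξ *
              chirp α (-(l ^ 2)) (a * ξ) *
              Complex.exp (-(Complex.I) * ((l ^ 2 * ∑ k, b k * ξ k / Real.sin (α k) : ℝ) : ℂ)) *
              MFrFT c α l ψ (a * ξ)) from by ring, hsqrt]
        ring
end
end
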